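/- The conflict-based and the value-based definitions of opacity are incomparable: there exists a valued history that is opaque under the conflict-based definition (after erasing values) but is not value-opaque, and there exists a valued history that is value-opaque but is not opaque under the conflict-based definition (after erasing values). -/

import Mathlib

/-- Statements of the conflict-based setting: reads, writes (without values),
commits and aborts, each tagged with a transaction identifier (a positive natural). -/
inductive Stmt : Type where
  | rd (t : ℕ+) (x : ℕ)
  | wr (t : ℕ+) (x : ℕ)
  | cmt (t : ℕ+)
  | abrt (t : ℕ+)
  deriving DecidableEq

/-- The transaction identifier of a statement. -/
def Stmt.txn : Stmt → ℕ+
  | .rd t _ => t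
  | .wr t _ => t
  | .cmt t => t
  | .abrt t => t

/-- The variable mentioned by a statement, if any. -/
def Stmt.var? : Stmt → Option ℕ
  | .rd _ x => some x
  | .wr _ x => some x
  | _ => none

/-- Projection of a history onto a transaction. -/
def proj (h : List Stmt) (t : ℕ+) : List Stmt :=
  h.filter (fun s => s.txn = t)

/-- Transaction `t` occurs in `h`. -/
def occurs (h : List Stmt) (t : ℕ+) : Prop := proj h t ≠ []

/-- Transaction `t` is committing in `h`. -/
def committing (h : List Stmt) (t : ℕ+) : Prop :=
  (proj h t).getLast? = some (Stmt.cmt t)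

/-- Transaction `t` is aborting in `h`. -/
def aborting (h : List Stmt) (t : ℕ+) : Prop :=
  (proj h t).getLast? = some (Stmt.abrt t)

/-- Transaction `t` is finished in `h`. -/
def finished (h : List Stmt) (t : ℕ+) : Prop :=
  committing h t ∨ aborting h t

/-- Transaction `t` is live in `h`: it occurs but is not finished. -/
def live (h : List Stmt) (t : ℕ+) : Prop := occurs h t ∧ ¬ finished h t

/-- `t1 <_h t2`: both occur and every statement of `t1` occurs strictly before
every statement of `t2` (equivalently, the last statement of `t1` is before the
first statement of `t2`). -/
def precedes (h : List Stmt) (t1 t2 : ℕ+) : Prop :=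
  occurs h t1 ∧ occurs h t2 ∧
  ∀ (i j : ℕ) (s1 s2 : Stmt), h[i]? = some s1 → h[j]? = some s2 →
    s1.txn = t1 → s2.txn = t2 → i < j

/-- A history is sequential if any two distinct occurring transactions are
comparable under `<_h`. -/
def sequential (h : List Stmt) : Prop :=
  ∀ t1 t2, t1 ≠ t2 → occurs h t1 → occurs h t2 →
    precedes h t1 t2 ∨ precedes h t2 t1

/-- Transaction `t` writes to variable `x` in `h`. -/
def writes (h : List Stmt) (t : ℕ+) (x : ℕ) : Prop := Stmt.wr t x ∈ h

/-- The occurrence at position `i` in `h` is a global read `rd_t(x)`: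
no `wr_t(x)` occurs before it. -/
def globalRead (h : List Stmt) (i : ℕ) (t : ℕ+) (x : ℕ) : Prop :=
  h[i]? = some (Stmt.rd t x) ∧ ∀ j, j < i → h[j]? ≠ some (Stmt.wr t x)

/-- The statement occurrences at positions `i` and `j` of `h` (belonging to
distinct transactions) are in conflict. -/
def conflict (h : List Stmt) (i j : ℕ) : Prop :=
  ∃ t1 t2, t1 ≠ t2 ∧
    ((∃ x, globalRead h i t1 x ∧ h[j]? = some (Stmt.cmt t2) ∧ writes h t2 x) ∨
     (∃ x, globalRead h j t1 x ∧ h[i]? = some (Stmt.cmt t2) ∧ writes h t2 x) ∨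
     (h[i]? = some (Stmt.cmt t1) ∧ h[j]? = some (Stmt.cmt t2) ∧
      ∃ x, writes h t1 x ∧ writes h t2 x))

/-- Position `i` of `h` and position `i'` of `h'` carry the same statement `s`,
and it is in both cases the same (`k`-th) occurrence of `s`. -/
def corresponds (h h' : List Stmt) (i i' : ℕ) : Prop :=
  ∃ s, h[i]? = some s ∧ h'[i']? = some s ∧
    (h.take i).count s = (h'.take i').count s

/-- `h'` is strictly equivalent to `h`: it is a rearrangement with the same
per-transaction projections, preserving the real-time order of finished
transactions and the relative order of conflicting statement occurrences. -/
def strictEquiv (h h' : List Stmt) : Prop :=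
  h.Perm h' ∧
  (∀ t, proj h t = proj h' t) ∧
  (∀ t1 t2, t1 ≠ t2 → precedes h t1 t2 → finished h t1 → precedes h' t1 t2) ∧
  (∀ i j i' j', i < j → conflict h i j →
     corresponds h h' i i' → corresponds h h' j j' → i' < j')

/-- A history is opaque if some sequential history is strictly equivalent to it. -/
def IsOpaque (h : List Stmt) : Prop :=
  ∃ h', sequential h' ∧ strictEquiv h h'

/-- Statements of the value-based setting: reads and writes carry a value. -/
inductive VStmt : Type where
  | rd (t : ℕ+) (x : ℕ) (v : ℕ)
  | wr (t : ℕ+) (x : ℕ) (v : ℕ)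
  | cmt (t : ℕ+)
  | abrt (t : ℕ+)
  deriving DecidableEq

/-- The transaction identifier of a valued statement. -/
def VStmt.txn : VStmt → ℕ+
  | .rd t _ _ => t
  | .wr t _ _ => t
  | .cmt t => t
  | .abrt t => t

/-- Erasing the value from a valued statement. -/
def VStmt.erase : VStmt → Stmt
  | .rd t x _ => Stmt.rd t x
  | .wr t x _ => Stmt.wr t x
  | .cmt t => Stmt.cmt t
  | .abrt t => Stmt.abrt t

/-- Erasing all values from a valued history. -/
def eraseH (h : List VStmt) : List Stmt := h.map VStmt.erase

/-- Projection of a valued history onto a transaction. -/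
def vProj (h : List VStmt) (t : ℕ+) : List VStmt :=
  h.filter (fun s => s.txn = t)

def vOccurs (h : List VStmt) (t : ℕ+) : Prop := vProj h t ≠ []

def vCommitting (h : List VStmt) (t : ℕ+) : Prop :=
  (vProj h t).getLast? = some (VStmt.cmt t)

def vAborting (h : List VStmt) (t : ℕ+) : Prop :=
  (vProj h t).getLast? = some (VStmt.abrt t)

def vFinished (h : List VStmt) (t : ℕ+) : Prop :=
  vCommitting h t ∨ vAborting h t

def vPrecedes (h : List VStmt) (t1 t2 : ℕ+) : Prop :=
  vOccurs h t1 ∧ vOccurs h t2 ∧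
  ∀ (i j : ℕ) (s1 s2 : VStmt), h[i]? = some s1 → h[j]? = some s2 →
    s1.txn = t1 → s2.txn = t2 → i < j

def vSequential (h : List VStmt) : Prop :=
  ∀ t1 t2, t1 ≠ t2 → vOccurs h t1 → vOccurs h t2 →
    vPrecedes h t1 t2 ∨ vPrecedes h t2 t1

/-- Transaction `t` writes to `x` in the valued history `h`. -/
def vWrites (h : List VStmt) (t : ℕ+) (x : ℕ) : Prop :=
  ∃ v, VStmt.wr t x v ∈ h

/-- The occurrence at position `i` in `h` is a global read `rd_t(x,v)`. -/
def vGlobalRead (h : List VStmt) (i : ℕ) (t : ℕ+) (x : ℕ) (v : ℕ) : Prop :=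
  h[i]? = some (VStmt.rd t x v) ∧ ∀ (j : ℕ) (v' : ℕ), j < i → h[j]? ≠ some (VStmt.wr t x v')

/-- The last write of transaction `t` to variable `x` in `h` has value `v`. -/
def lastWrite (h : List VStmt) (t : ℕ+) (x : ℕ) (v : ℕ) : Prop :=
  ∃ i, h[i]? = some (VStmt.wr t x v) ∧
    ∀ (j : ℕ) (v' : ℕ), i < j → h[j]? ≠ some (VStmt.wr t x v')

/-- `t'` is a `<_h`-maximal committing transaction preceding `t` that writes to `x`. -/
def maxCommittingWriter (h : List VStmt) (t : ℕ+) (x : ℕ) (t' : ℕ+) : Prop :=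
  vCommitting h t' ∧ vPrecedes h t' t ∧ vWrites h t' x ∧
  ∀ t'', vCommitting h t'' → vPrecedes h t'' t → vWrites h t'' x →
    t'' = t' ∨ vPrecedes h t'' t'

/-- A sequential valued history is legal: every global read `rd_t(x,v)` returns
the value of the last write to `x` of the `<_h`-maximal committing transaction
preceding `t` writing to `x`, and `0` if no such transaction exists. -/
def vLegal (h : List VStmt) : Prop :=
  ∀ i t x v, vGlobalRead h i t x v →
    (∀ t', maxCommittingWriter h t x t' → ∀ v', lastWrite h t' x v' → v = v') ∧
    ((¬ ∃ t', vCommitting h t' ∧ vPrecedes h t' t ∧ vWrites h t' x) → v = 0)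

/-- Value-equivalence of valued histories. -/
def valueEquiv (h h' : List VStmt) : Prop :=
  (∀ t, vProj h t = vProj h' t) ∧
  (∀ t1 t2, t1 ≠ t2 → vPrecedes h t1 t2 → vFinished h t1 → vPrecedes h' t1 t2)

/-- A valued history is value-opaque if some sequential legal valued history is
value-equivalent to it. -/
def ValueOpaque (h : List VStmt) : Prop :=
  ∃ h', vSequential h' ∧ vLegal h' ∧ valueEquiv h h'

section Aux

lemma count_take_eq_zero {α : Type*} [DecidableEq α] (l : List α) (a : ℕ) (s : α)
    (h : l[a]? = some s) (hc : l.count s = 1) : (l.take a).count s = 0 := by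
  have hd : s ∈ l.drop a := by
    have : (l.drop a)[0]? = l[a + 0]? := List.getElem?_drop
    simp only [Nat.add_zero, h] at this
    exact List.mem_iff_getElem?.mpr ⟨0, this⟩
  have h1 : 1 ≤ (l.drop a).count s := List.count_pos_iff.mpr hd
  have h2 : (l.take a).count s + (l.drop a).count s = 1 := by
    rw [← List.count_append, l.take_append_drop a, hc]
  omega

def H1 : List VStmt := [VStmt.rd 1 0 1]

def H2 : List VStmt :=
  [VStmt.rd 1 0 0, VStmt.wr 2 0 0, VStmt.wr 2 1 1, VStmt.cmt 2, VStmt.rd 1 1 1]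

def H2' : List VStmt :=
  [VStmt.wr 2 0 0, VStmt.wr 2 1 1, VStmt.cmt 2, VStmt.rd 1 0 0, VStmt.rd 1 1 1]

def E2 : List Stmt :=
  [Stmt.rd 1 0, Stmt.wr 2 0, Stmt.wr 2 1, Stmt.cmt 2, Stmt.rd 1 1]

lemma H1_opaque : IsOpaque (eraseH H1) := by
  refine ⟨eraseH H1, ?_, ?_⟩
  · intro t1 t2 hne h1 h2
    exfalso
    have e1 : t1 = 1 := by
      by_contra h
      apply h1
      simp [proj, eraseH, H1, VStmt.erase, Stmt.txn, Ne.symm h]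
    have e2 : t2 = 1 := by
      by_contra h
      apply h2
      simp [proj, eraseH, H1, VStmt.erase, Stmt.txn, Ne.symm h]
    exact hne (e1.trans e2.symm)
  · refine ⟨List.Perm.refl _, fun t => rfl, fun _ _ _ hp _ => hp, ?_⟩
    intro i j i' j' hij hc _ _
    exfalso
    obtain ⟨t1, t2, -, hcc⟩ := hc
    have hj : (eraseH H1)[j]? ≠ none := by
      rcases hcc with ⟨x, _, hj, _⟩ | ⟨x, ⟨hj, _⟩, _, _⟩ | ⟨_, hj, _⟩ <;> simp [hj]
    have : j < (eraseH H1).length := by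
      by_contra hlt
      exact hj (List.getElem?_eq_none (by omega))
    simp [eraseH, H1] at this
    omega

lemma H1_not_valueOpaque : ¬ ValueOpaque H1 := by
  rintro ⟨h', hseq, hleg, hproj, hprec⟩
  have hall : ∀ s ∈ h', s = VStmt.rd 1 0 1 := by
    intro s hs
    have hmem : s ∈ vProj h' s.txn := by
      simp [vProj, List.mem_filter, hs]
    rw [← hproj, vProj] at hmem
    have := (List.mem_filter.mp hmem).1
    simpa [H1] using this
  have hh' : h' = [VStmt.rd 1 0 1] := by
    have hf : h'.filter (fun s => s.txn = (1:ℕ+)) = h' := by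
      rw [List.filter_eq_self]
      intro a ha
      simp [hall a ha, VStmt.txn]
    calc h' = vProj h' 1 := hf.symm
      _ = vProj H1 1 := (hproj 1).symm
      _ = [VStmt.rd 1 0 1] := by unfold vProj; decide
  subst hh'
  have hgr : vGlobalRead [VStmt.rd 1 0 1] 0 1 0 1 :=
    ⟨rfl, fun j v' hj => by omega⟩
  obtain ⟨-, h0⟩ := hleg 0 1 0 1 hgr
  have : (1:ℕ) = 0 := by
    apply h0
    rintro ⟨t', hco, hpr, v, hw⟩
    simp at hw
  exact one_ne_zero this

lemma H2'_prec21 : vPrecedes H2' 2 1 := by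
  refine ⟨by unfold vOccurs; decide, by unfold vOccurs; decide, ?_⟩
  intro i j s1 s2 hi hj ht1 ht2
  have hi5 : i < 5 := by
    by_contra h
    rw [List.getElem?_eq_none (by simp [H2']; omega)] at hi
    cases hi
  have hj5 : j < 5 := by
    by_contra h
    rw [List.getElem?_eq_none (by simp [H2']; omega)] at hj
    cases hj
  interval_cases i <;> interval_cases j <;>
    simp only [H2', List.getElem?_cons_zero, List.getElem?_cons_succ,
      Option.some.injEq] at hi hj <;>
    subst hi <;> subst hj <;> first
      | omega
      | simp [VStmt.txn] at ht1 ht2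

lemma H2'_committing2 : ∀ t' : ℕ+, vCommitting H2' t' → t' = 2 := by
  intro t' hct
  by_cases h2 : t' = 2
  · exact h2
  by_cases h1 : t' = 1
  · subst h1
    exact absurd hct (by unfold vCommitting vProj; decide)
  · exfalso
    simp [vCommitting, vProj, H2', VStmt.txn, Ne.symm h1, Ne.symm h2] at hct

lemma H2_valueOpaque : ValueOpaque H2 := by
  refine ⟨H2', ?_, ?_, ?_, ?_⟩
  · -- sequential
    intro t1 t2 hne h1 h2
    have key : ∀ t : ℕ+, vOccurs H2' t → t = 1 ∨ t = 2 := by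
      intro t ht
      by_contra h
      push_neg at h
      apply ht
      simp [vProj, H2', VStmt.txn, Ne.symm h.1, Ne.symm h.2]
    rcases key t1 h1 with e1 | e1 <;> rcases key t2 h2 with e2 | e2 <;>
      subst e1 <;> subst e2
    · exact absurd rfl hne
    · exact Or.inr H2'_prec21
    · exact Or.inl H2'_prec21
    · exact absurd rfl hne
  · -- legal
    intro i t x v hgr
    obtain ⟨hi, hglob⟩ := hgr
    have hi5 : i < 5 := by
      by_contra h
      rw [List.getElem?_eq_none (by simp [H2']; omega)] at hi
      cases hi
    have hwx : ∀ v', lastWrite H2' 2 0 v' → v' = 0 := by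
      rintro v' ⟨k, hk, -⟩
      have hk5 : k < 5 := by
        by_contra h
        rw [List.getElem?_eq_none (by simp [H2']; omega)] at hk
        cases hk
      interval_cases k <;> simp [H2'] at hk <;> omega
    have hwy : ∀ v', lastWrite H2' 2 1 v' → v' = 1 := by
      rintro v' ⟨k, hk, -⟩
      have hk5 : k < 5 := by
        by_contra h
        rw [List.getElem?_eq_none (by simp [H2']; omega)] at hk
        cases hk
      interval_cases k <;> simp [H2'] at hk <;> omega
    interval_cases i <;> simp only [H2', List.getElem?_cons_zero,
        List.getElem?_cons_succ, Option.some.injEq] at hi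
    · exact absurd hi (by simp)
    · exact absurd hi (by simp)
    · exact absurd hi (by simp)
    · -- i = 3 : rd 1 0 0
      obtain ⟨rfl, rfl, rfl⟩ : 1 = t ∧ 0 = x ∧ 0 = v := by
        simpa using hi
      constructor
      · rintro t' ⟨hct, -, -, -⟩ v' hlw
        have := H2'_committing2 t' hct
        subst this
        exact (hwx v' hlw).symm
      · intro hno
        exact absurd ⟨2, by unfold vCommitting vProj; decide, H2'_prec21,
          ⟨0, by decide⟩⟩ hno
    · -- i = 4 : rd 1 1 1
      obtain ⟨rfl, rfl, rfl⟩ : 1 = t ∧ 1 = x ∧ 1 = v := by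
        simpa using hi
      constructor
      · rintro t' ⟨hct, -, -, -⟩ v' hlw
        have := H2'_committing2 t' hct
        subst this
        exact (hwy v' hlw).symm
      · intro hno
        exact absurd ⟨2, by unfold vCommitting vProj; decide, H2'_prec21,
          ⟨1, by decide⟩⟩ hno
  · -- projections
    intro t
    by_cases h1 : t = 1
    · subst h1; unfold vProj; decide
    · by_cases h2 : t = 2
      · subst h2; unfold vProj; decide
      · simp [vProj, H2, H2', VStmt.txn, Ne.symm h1, Ne.symm h2]
  · -- precedes preservation (vacuous)
    intro t1 t2 hne hpr hfin
    exfalso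
    obtain ⟨ho1, ho2, hidx⟩ := hpr
    have key : ∀ t : ℕ+, vOccurs H2 t → t = 1 ∨ t = 2 := by
      intro t ht
      by_contra h
      push_neg at h
      apply ht
      simp [vProj, H2, VStmt.txn, Ne.symm h.1, Ne.symm h.2]
    rcases key t1 ho1 with e1 | e1 <;> rcases key t2 ho2 with e2 | e2 <;>
      subst e1 <;> subst e2
    · exact hne rfl
    · have := hidx 4 1 (VStmt.rd 1 1 1) (VStmt.wr 2 0 0) (by decide) (by decide)
        (by decide) (by decide)
      omega
    · have := hidx 1 0 (VStmt.wr 2 0 0) (VStmt.rd 1 0 0) (by decide) (by decide)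
        (by decide) (by decide)
      omega
    · exact hne rfl

lemma eraseH_H2 : eraseH H2 = E2 := rfl

lemma H2_not_opaque : ¬ IsOpaque (eraseH H2) := by
  rw [eraseH_H2]
  rintro ⟨h', hseq, hperm, hproj, -, hconf⟩
  have hpos : ∀ s : Stmt, E2.count s = 1 →
      ∃ a, h'[a]? = some s ∧ (h'.take a).count s = 0 := by
    intro s hc
    have hmem : s ∈ h' := hperm.mem_iff.mp (List.count_pos_iff.mp (by omega))
    obtain ⟨a, ha⟩ := List.mem_iff_getElem?.mp hmem
    exact ⟨a, ha, count_take_eq_zero h' a s ha (by rw [← hperm.count_eq]; exact hc)⟩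
  obtain ⟨a, ha, hca⟩ := hpos (Stmt.rd 1 0) (by decide)
  obtain ⟨c, hc, hcc⟩ := hpos (Stmt.cmt 2) (by decide)
  obtain ⟨b, hb, hcb⟩ := hpos (Stmt.rd 1 1) (by decide)
  have conf03 : conflict E2 0 3 :=
    ⟨1, 2, by decide, Or.inl ⟨0, ⟨by decide, fun j hj => by omega⟩, by decide,
      show Stmt.wr 2 0 ∈ E2 by decide⟩⟩
  have conf34 : conflict E2 3 4 := by
    refine ⟨1, 2, by decide, Or.inr (Or.inl ⟨1, ⟨by decide, ?_⟩, by decide,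
      show Stmt.wr 2 1 ∈ E2 by decide⟩)⟩
    intro j hj
    interval_cases j <;> decide
  have hac : a < c := hconf 0 3 a c (by omega) conf03
    ⟨Stmt.rd 1 0, by decide, ha, by rw [hca]; decide⟩
    ⟨Stmt.cmt 2, by decide, hc, by rw [hcc]; decide⟩
  have hcb' : c < b := hconf 3 4 c b (by omega) conf34
    ⟨Stmt.cmt 2, by decide, hc, by rw [hcc]; decide⟩
    ⟨Stmt.rd 1 1, by decide, hb, by rw [hcb]; decide⟩
  have ho1 : occurs h' 1 := by
    unfold occurs
    rw [← hproj]
    unfold proj; decide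
  have ho2 : occurs h' 2 := by
    unfold occurs
    rw [← hproj]
    unfold proj; decide
  rcases hseq 1 2 (by decide) ho1 ho2 with ⟨-, -, hidx⟩ | ⟨-, -, hidx⟩
  · have := hidx b c (Stmt.rd 1 1) (Stmt.cmt 2) hb hc rfl rfl
    omega
  · have := hidx c a (Stmt.cmt 2) (Stmt.rd 1 0) hc ha rfl rfl
    omega

end Aux

/-- The conflict-based and the value-based definitions of opacity are
incomparable: some valued history is conflict-opaque (after erasing values) but
not value-opaque, and some valued history is value-opaque but not conflict-opaque
(after erasing values). -/
theorem conflict_and_value_opacity_incomparable :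
    (∃ h : List VStmt, IsOpaque (eraseH h) ∧ ¬ ValueOpaque h) ∧
    (∃ h : List VStmt, ValueOpaque h ∧ ¬ IsOpaque (eraseH h)) :=
  ⟨⟨H1, H1_opaque, H1_not_valueOpaque⟩, ⟨H2, H2_valueOpaque, H2_not_opaque⟩⟩
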